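/- Let H : [t₀,ϑ₀]×ℝⁿ×ℝⁿ → ℝ satisfy conditions H1–H3 with constant Υ > 0. Then there exist a positive integer m, nonempty compact sets P, Q ⊆ ℝ^m, and a function f : [t₀,ϑ₀]×ℝⁿ×P×Q → ℝⁿ satisfying conditions F1–F3 such that for every (t,x,s) ∈ [t₀,ϑ₀]×ℝⁿ×ℝⁿ one has H(t,x,s) = min_{u∈P} max_{v∈Q} ⟨s, f(t,x,u,v)⟩ (in particular the indicated minima and maxima are attained). -/

import Mathlib

open Set Filter Metric
open scoped RealInnerProductSpace

noncomputable section

abbrev Eu (n : ℕ) := EuclideanSpace ℝ (Fin n)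

/-- ω belongs to the class Ω: even, nonnegative, subadditive, and ω(δ) → 0 as δ → 0. -/
def MemOmega (ω : ℝ → ℝ) : Prop :=
  (∀ δ, 0 ≤ ω δ) ∧ (∀ δ, ω (-δ) = ω δ) ∧
  (∀ δ₁ δ₂, ω (δ₁ + δ₂) ≤ ω δ₁ + ω δ₂) ∧
  Tendsto ω (nhds 0) (nhds 0)

/-- Conditions H1–H3 with constant Υ for a Hamiltonian H on [t₀,ϑ₀]×ℝⁿ×ℝⁿ. -/
def SatisfiesH (t₀ ϑ₀ : ℝ) (n : ℕ) (Υ : ℝ) (H : ℝ → Eu n → Eu n → ℝ) : Prop :=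
  (∀ t ∈ Icc t₀ ϑ₀, ∀ x s : Eu n, |H t x s| ≤ Υ * ‖s‖ * (1 + ‖x‖)) ∧
  (∀ A : Set (Eu n), Bornology.IsBounded A →
    ∃ ωA : ℝ → ℝ, ∃ LA : ℝ, MemOmega ωA ∧ 0 < LA ∧
      ∀ R : ℝ, 0 < R → ∀ t' ∈ Icc t₀ ϑ₀, ∀ t'' ∈ Icc t₀ ϑ₀,
        ∀ x' ∈ A, ∀ x'' ∈ A, ∀ s' s'' : Eu n, ‖s'‖ ≤ R → ‖s''‖ ≤ R →
          |H t' x' s' - H t'' x'' s''| ≤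
            ωA (t' - t'') + LA * R * ‖x' - x''‖ +
              Υ * (1 + min ‖x'‖ ‖x''‖) * ‖s' - s''‖) ∧
  (∀ t ∈ Icc t₀ ϑ₀, ∀ x s : Eu n, ∀ α : ℝ, 0 ≤ α → H t x (α • s) = α * H t x s)

/-- Conditions F1–F3 for a game dynamics f on [t₀,ϑ₀]×ℝⁿ×P×Q. -/
def SatisfiesF (t₀ ϑ₀ : ℝ) (n m : ℕ) (P Q : Set (Eu m))
    (f : ℝ → Eu n → Eu m → Eu m → Eu n) : Prop :=
  ContinuousOn (fun p : ℝ × Eu n × Eu m × Eu m => f p.1 p.2.1 p.2.2.1 p.2.2.2)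
    (Icc t₀ ϑ₀ ×ˢ (univ : Set (Eu n)) ×ˢ P ×ˢ Q) ∧
  (∀ A : Set (Eu n), Bornology.IsBounded A → ∃ K : ℝ, 0 < K ∧
    ∀ t ∈ Icc t₀ ϑ₀, ∀ x' ∈ A, ∀ x'' ∈ A, ∀ u ∈ P, ∀ v ∈ Q,
      ‖f t x' u v - f t x'' u v‖ ≤ K * ‖x' - x''‖) ∧
  (∃ Λ : ℝ, 0 < Λ ∧ ∀ t ∈ Icc t₀ ϑ₀, ∀ x : Eu n, ∀ u ∈ P, ∀ v ∈ Q,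
    ‖f t x u v‖ ≤ Λ * (1 + ‖x‖))

namespace HamAux

variable {n : ℕ}

def snocE (a : Eu n) (b : ℝ) : Eu (n+1) :=
  (WithLp.equiv 2 _).symm (Fin.snoc ((WithLp.equiv 2 _) a) b)

def prjE (v : Eu (n+1)) : Eu n :=
  (WithLp.equiv 2 _).symm (Fin.init ((WithLp.equiv 2 _) v))

def lastE (v : Eu (n+1)) : ℝ := (WithLp.equiv 2 _) v (Fin.last n)

lemma prjE_snocE (a : Eu n) (b : ℝ) : prjE (snocE a b) = a := by
  ext i
  simp [prjE, snocE, Fin.init, Fin.snoc_castSucc]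

lemma lastE_snocE (a : Eu n) (b : ℝ) : lastE (snocE a b) = b := by
  simp [lastE, snocE]

lemma continuous_prjE : Continuous (prjE : Eu (n+1) → Eu n) := by
  unfold prjE
  exact (PiLp.continuous_toLp 2 _).comp
    ((continuous_pi fun i => (continuous_apply (Fin.castSucc i))).comp (PiLp.continuous_ofLp 2 _))

lemma continuous_lastE : Continuous (lastE : Eu (n+1) → ℝ) := by
  unfold lastE
  exact (continuous_apply (Fin.last n)).comp (PiLp.continuous_ofLp 2 _)

lemma continuous_snocE : Continuous (fun w : Eu n × ℝ => snocE w.1 w.2) := by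
  unfold snocE
  refine (PiLp.continuous_toLp 2 _).comp (continuous_pi fun i => ?_)
  induction i using Fin.lastCases with
  | last => simpa [Fin.snoc_last] using
      (continuous_snd : Continuous fun w : Eu n × ℝ => w.2)
  | cast j =>
      simpa [Fin.snoc_castSucc, Function.comp_def] using
        ((continuous_apply j).comp (PiLp.continuous_ofLp 2 _)).comp
          (continuous_fst : Continuous fun w : Eu n × ℝ => w.1)

def Qset (n : ℕ) : Set (Eu (n+1)) :=
  (fun w : Eu n × ℝ => snocE w.1 w.2) '' (closedBall 0 1 ×ˢ Icc (-1:ℝ) 1)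

def Pset (n : ℕ) : Set (Eu (n+1)) := (fun a : Eu n => snocE a 0) '' sphere 0 1

lemma omega_zero {ω : ℝ → ℝ} (hω : MemOmega ω) : ω 0 = 0 := by
  refine le_antisymm ?_ (hω.1 0)
  have h1 : Tendsto (fun δ : ℝ => ω δ + ω (-δ)) (nhds 0) (nhds (0 + 0)) :=
    hω.2.2.2.add (hω.2.2.2.comp (by simpa using (continuous_neg.tendsto (0:ℝ))))
  have h2 : ∀ δ : ℝ, ω 0 ≤ ω δ + ω (-δ) := fun δ => by simpa using hω.2.2.1 δ (-δ)
  simpa using ge_of_tendsto' h1 h2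

lemma key_ineq (h : Eu n → ℝ) (lam : ℝ) (hlam : 0 ≤ lam)
    (hbound : ∀ w : Eu n, |h w| ≤ lam * ‖w‖)
    (hlip : ∀ w w' : Eu n, |h w - h w'| ≤ lam * ‖w - w'‖)
    (hom : ∀ (w : Eu n) (α : ℝ), 0 ≤ α → h (α • w) = α * h w)
    (s a : Eu n) (ha : ‖a‖ = 1) :
    h s ≤ h a * ⟪s, a⟫ + lam * (|⟪s, a⟫| - ⟪s, a⟫) + 2 * lam * ‖s - ⟪s, a⟫ • a‖ := by
  set p := ⟪s, a⟫ with hp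
  set w := s - p • a with hw
  have hd : |h s - h (p • a)| ≤ lam * ‖w‖ := hlip s (p • a)
  have hd' : h s ≤ h (p • a) + lam * ‖w‖ := by
    have := (abs_le.mp hd).2; linarith
  have hwnn : (0:ℝ) ≤ ‖w‖ := norm_nonneg w
  rcases le_or_gt 0 p with hp0 | hp0
  · have hhom : h (p • a) = p * h a := hom a p hp0
    have habs : |p| = p := abs_of_nonneg hp0
    rw [habs]
    nlinarith [mul_nonneg hlam hwnn]
  · have hpa : p • a = (-p) • (-a) := by rw [neg_smul_neg]
    have hhom : h (p • a) = (-p) * h (-a) := by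
      rw [hpa]; exact hom (-a) (-p) (by linarith)
    have hba := hbound (-a)
    have hba' := hbound a
    rw [norm_neg, ha, mul_one] at hba
    rw [ha, mul_one] at hba'
    have h1 : h (-a) ≤ lam := (abs_le.mp hba).2
    have h2 : -lam ≤ h a := (abs_le.mp hba').1
    have h2b : h a ≤ lam := (abs_le.mp hba').2
    have habs : |p| = -p := abs_of_neg hp0
    rw [habs]
    have h3 : 2 * lam * p ≤ p * (h a + h (-a)) := by
      nlinarith [mul_nonneg (by linarith : (0:ℝ) ≤ 2*lam - (h a + h (-a)))
        (by linarith : (0:ℝ) ≤ -p)]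
    nlinarith [mul_nonneg hlam hwnn]

lemma isGreatest_aux (lam c : ℝ) (hlam : 0 ≤ lam) (s a : Eu n) :
    IsGreatest ((fun v => c * ⟪s, a⟫ + lam * (lastE v - 1) * ⟪s, a⟫
        + 2 * lam * ⟪s - ⟪s, a⟫ • a, prjE v⟫) '' Qset n)
      (c * ⟪s, a⟫ + lam * (|⟪s, a⟫| - ⟪s, a⟫) + 2 * lam * ‖s - ⟪s, a⟫ • a‖) := by
  set p := ⟪s, a⟫ with hp
  set w := s - p • a with hw
  constructor
  · refine ⟨snocE (‖w‖⁻¹ • w) (if 0 ≤ p then 1 else -1), ⟨⟨‖w‖⁻¹ • w, _⟩, ⟨?_, ?_⟩, rfl⟩, ?_⟩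
    · rw [mem_closedBall_zero_iff, norm_smul, norm_inv, norm_norm]
      rcases eq_or_ne w 0 with h0 | h0
      · simp [h0]
      · rw [inv_mul_cancel₀ (norm_ne_zero_iff.mpr h0)]
    · show (if 0 ≤ p then (1:ℝ) else -1) ∈ Icc (-1:ℝ) 1
      split_ifs <;> norm_num
    · simp only [prjE_snocE, lastE_snocE]
      have hib : ⟪w, ‖w‖⁻¹ • w⟫ = ‖w‖ := by
        rcases eq_or_ne w 0 with h0 | h0
        · simp [h0]
        · rw [real_inner_smul_right, real_inner_self_eq_norm_mul_norm]
          field_simp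
      rw [hib]
      by_cases h : 0 ≤ p
      · rw [if_pos h, abs_of_nonneg h]; ring
      · rw [if_neg h, abs_of_neg (lt_of_not_ge h)]; ring
  · rintro r ⟨v, ⟨⟨b, cc⟩, ⟨hb, hcc⟩, rfl⟩, rfl⟩
    simp only [prjE_snocE, lastE_snocE]
    simp only [mem_closedBall_zero_iff] at hb
    simp only [mem_Icc] at hcc
    have h1 : (cc - 1) * p ≤ |p| - p := by
      have : cc * p ≤ |p| := by
        calc cc * p ≤ |cc * p| := le_abs_self _
        _ = |cc| * |p| := abs_mul _ _
        _ ≤ 1 * |p| := by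
            apply mul_le_mul_of_nonneg_right _ (abs_nonneg p)
            rw [abs_le]; exact hcc
        _ = |p| := one_mul _
      linarith
    have h2 : ⟪w, b⟫ ≤ ‖w‖ := by
      calc ⟪w, b⟫ ≤ ‖w‖ * ‖b‖ := real_inner_le_norm w b
      _ ≤ ‖w‖ * 1 := mul_le_mul_of_nonneg_left hb (norm_nonneg w)
      _ = ‖w‖ := mul_one _
    have := mul_le_mul_of_nonneg_left h1 hlam
    have := mul_le_mul_of_nonneg_left h2 (by linarith : (0:ℝ) ≤ 2 * lam)
    nlinarith

variable {t₀ ϑ₀ : ℝ} {Υ : ℝ} {H : ℝ → Eu n → Eu n → ℝ}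

lemma hLip (hH : SatisfiesH t₀ ϑ₀ n Υ H) {t : ℝ} (htI : t ∈ Icc t₀ ϑ₀)
    (x : Eu n) (s' s'' : Eu n) :
    |H t x s' - H t x s''| ≤ Υ * (1 + ‖x‖) * ‖s' - s''‖ := by
  obtain ⟨ω, L, hω, hL, hb⟩ := hH.2.1 {x} Bornology.isBounded_singleton
  have hR : (0:ℝ) < ‖s'‖ + ‖s''‖ + 1 := by positivity
  have := hb (‖s'‖ + ‖s''‖ + 1) hR t htI t htI x rfl x rfl s' s''
    (by linarith [norm_nonneg s'']) (by linarith [norm_nonneg s'])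
  simpa [omega_zero hω, min_self] using this

lemma Hcont (hΥ : 0 < Υ) (hH : SatisfiesH t₀ ϑ₀ n Υ H) :
    ContinuousOn (fun p : ℝ × Eu n × Eu n => H p.1 p.2.1 p.2.2)
      (Icc t₀ ϑ₀ ×ˢ (univ : Set (Eu n)) ×ˢ (univ : Set (Eu n))) := by
  rintro ⟨t, x, s⟩ ⟨htI, -, -⟩
  obtain ⟨ω, L, hω, hL, hb⟩ := hH.2.1 (closedBall x 1) isBounded_closedBall
  rw [Metric.continuousWithinAt_iff]
  intro ε hε
  set R : ℝ := ‖s‖ + 1 with hR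
  have hRpos : 0 < R := by positivity
  have hωt := Metric.tendsto_nhds_nhds.mp hω.2.2.2
  obtain ⟨δ₁, hδ₁pos, hδ₁⟩ := hωt (ε/3) (by linarith)
  set C1 : ℝ := L * R + 1 with hC1
  set C2 : ℝ := Υ * (1 + ‖x‖ + 1) + 1 with hC2
  have hC1pos : 0 < C1 := by positivity
  have hC2pos : 0 < C2 := by positivity
  refine ⟨min (min δ₁ 1) (min (ε/3/C1) (ε/3/C2)), by positivity, ?_⟩
  rintro ⟨t', x', s'⟩ ⟨ht'I, -, -⟩ hdist
  simp only [Prod.dist_eq, max_lt_iff] at hdist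
  obtain ⟨hdt, hdx, hds⟩ := hdist
  rw [dist_eq_norm] at hdx hds
  rw [Real.dist_eq] at hdt
  have hdt1 : |t' - t| < δ₁ := lt_of_lt_of_le hdt (le_trans (min_le_left _ _) (min_le_left _ _))
  have hdx1 : ‖x' - x‖ ≤ 1 := le_of_lt (lt_of_lt_of_le hdx (le_trans (min_le_left _ _) (min_le_right _ _)))
  have hdxC : ‖x' - x‖ < ε/3/C1 := lt_of_lt_of_le hdx (le_trans (min_le_right _ _) (min_le_left _ _))
  have hdsC : ‖s' - s‖ < ε/3/C2 := lt_of_lt_of_le hds (le_trans (min_le_right _ _) (min_le_right _ _))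
  have hds1 : ‖s' - s‖ ≤ 1 := le_of_lt (lt_of_lt_of_le hds (le_trans (min_le_left _ _) (min_le_right _ _)))
  have hx'A : x' ∈ closedBall x 1 := by
    rw [mem_closedBall, dist_eq_norm]; exact hdx1
  have hxA : x ∈ closedBall x 1 := mem_closedBall_self zero_le_one
  have hs'R : ‖s'‖ ≤ R := by
    have := norm_sub_norm_le s' s
    rw [hR]; linarith
  have hsR : ‖s‖ ≤ R := by rw [hR]; linarith
  have key := hb R hRpos t' ht'I t htI x' hx'A x hxA s' s hs'R hsR
  have hωb : ω (t' - t) < ε/3 := by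
    have := hδ₁ (by simpa [Real.dist_eq] using hdt1)
    rw [Real.dist_eq] at this
    calc ω (t' - t) ≤ |ω (t' - t) - 0| := by rw [sub_zero]; exact le_abs_self _
    _ < ε/3 := by simpa using this
  have hLb : L * R * ‖x' - x‖ < ε/3 := by
    have h1 : L * R * ‖x' - x‖ ≤ C1 * ‖x' - x‖ := by
      apply mul_le_mul_of_nonneg_right _ (norm_nonneg _)
      rw [hC1]; linarith
    have h2 : C1 * ‖x' - x‖ < C1 * (ε/3/C1) := by
      rcases eq_or_lt_of_le (norm_nonneg (x' - x)) with h0 | h0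
      · rw [← h0, mul_zero]; positivity
      · exact (mul_lt_mul_iff_right₀ hC1pos).mpr hdxC
    exact lt_of_le_of_lt h1 (by rw [mul_div_cancel₀ _ (ne_of_gt hC1pos)] at h2; exact h2)
  have hmb : Υ * (1 + min ‖x'‖ ‖x‖) * ‖s' - s‖ < ε/3 := by
    have hx'n : ‖x'‖ ≤ ‖x‖ + 1 := by
      have := norm_sub_norm_le x' x
      linarith
    have h1 : Υ * (1 + min ‖x'‖ ‖x‖) * ‖s' - s‖ ≤ C2 * ‖s' - s‖ := by
      apply mul_le_mul_of_nonneg_right _ (norm_nonneg _)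
      have : min ‖x'‖ ‖x‖ ≤ ‖x‖ := min_le_right _ _
      rw [hC2]; nlinarith
    have h2 : C2 * ‖s' - s‖ < C2 * (ε/3/C2) := by
      rcases eq_or_lt_of_le (norm_nonneg (s' - s)) with h0 | h0
      · rw [← h0, mul_zero]; positivity
      · exact (mul_lt_mul_iff_right₀ hC2pos).mpr hdsC
    exact lt_of_le_of_lt h1 (by rw [mul_div_cancel₀ _ (ne_of_gt hC2pos)] at h2; exact h2)
  rw [Real.dist_eq]
  calc |H t' x' s' - H t x s|
      ≤ ω (t' - t) + L * R * ‖x' - x‖ + Υ * (1 + min ‖x'‖ ‖x‖) * ‖s' - s‖ := key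
  _ < ε/3 + ε/3 + ε/3 := by linarith
  _ = ε := by ring

/-- The game dynamics. -/
def fdyn (Υ : ℝ) (H : ℝ → Eu n → Eu n → ℝ) (t : ℝ) (x : Eu n) (u v : Eu (n+1)) : Eu n :=
  (H t x (prjE u) + Υ * (1 + ‖x‖) * (lastE v - 1)
    - 2 * (Υ * (1 + ‖x‖)) * ⟪prjE u, prjE v⟫) • prjE u
  + (2 * (Υ * (1 + ‖x‖))) • prjE v

lemma inner_fdyn (t : ℝ) (x : Eu n) (u v : Eu (n+1)) (s : Eu n) :
    ⟪s, fdyn Υ H t x u v⟫ = H t x (prjE u) * ⟪s, prjE u⟫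
      + (Υ * (1 + ‖x‖)) * (lastE v - 1) * ⟪s, prjE u⟫
      + 2 * (Υ * (1 + ‖x‖)) * ⟪s - ⟪s, prjE u⟫ • prjE u, prjE v⟫ := by
  simp only [fdyn, inner_add_right, real_inner_smul_right, inner_sub_left, real_inner_smul_left]
  ring

end HamAux

set_option maxHeartbeats 1000000 in
open HamAux in
/-- Every Hamiltonian satisfying H1–H3 is the minmax Hamiltonian of some
differential game: there are compact control sets P, Q and a dynamics f
satisfying F1–F3 with H(t,x,s) = min_{u ∈ P} max_{v ∈ Q} ⟨s, f(t,x,u,v)⟩,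
the minima and maxima being attained. -/
theorem hamiltonian_is_minmax
    (t₀ ϑ₀ : ℝ) (ht : t₀ < ϑ₀) (n : ℕ) (hn : 1 ≤ n) (Υ : ℝ) (hΥ : 0 < Υ)
    (H : ℝ → Eu n → Eu n → ℝ) (hH : SatisfiesH t₀ ϑ₀ n Υ H) :
    ∃ m : ℕ, 0 < m ∧ ∃ P Q : Set (Eu m), P.Nonempty ∧ Q.Nonempty ∧
      IsCompact P ∧ IsCompact Q ∧ ∃ f : ℝ → Eu n → Eu m → Eu m → Eu n,
        SatisfiesF t₀ ϑ₀ n m P Q f ∧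
        ∀ t ∈ Icc t₀ ϑ₀, ∀ x s : Eu n,
          (∀ u ∈ P, ∃ r : ℝ, IsGreatest ((fun v => ⟪s, f t x u v⟫) '' Q) r) ∧
          IsLeast {r : ℝ | ∃ u ∈ P,
            IsGreatest ((fun v => ⟪s, f t x u v⟫) '' Q) r} (H t x s) := by
  -- the distinguished unit vector
  set a₀ : Eu n := EuclideanSpace.single (⟨0, hn⟩ : Fin n) (1:ℝ) with ha₀def
  have ha₀ : ‖a₀‖ = 1 := by rw [ha₀def, EuclideanSpace.norm_single, norm_one]
  refine ⟨n+1, Nat.succ_pos n, Pset n, Qset n, ?_, ?_, ?_, ?_,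
    fdyn Υ H, ⟨?_, ?_, ?_⟩, ?_⟩
  · exact ⟨snocE a₀ 0, ⟨a₀, by simpa [mem_sphere_zero_iff_norm] using ha₀, rfl⟩⟩
  · exact ⟨snocE 0 0, ⟨(0, 0), ⟨by simp, by norm_num⟩, rfl⟩⟩
  · exact (isCompact_sphere (0 : Eu n) 1).image
      (continuous_snocE.comp (continuous_id.prodMk continuous_const))
  · exact ((isCompact_closedBall (0 : Eu n) 1).prod isCompact_Icc).image continuous_snocE
  -- F1 : continuity
  · have hmaps : MapsTo (fun p : ℝ × Eu n × Eu (n+1) × Eu (n+1) => (p.1, p.2.1, prjE p.2.2.1))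
        (Icc t₀ ϑ₀ ×ˢ (univ : Set (Eu n)) ×ˢ Pset n ×ˢ Qset n)
        (Icc t₀ ϑ₀ ×ˢ (univ : Set (Eu n)) ×ˢ (univ : Set (Eu n))) :=
      fun p hp => ⟨hp.1, mem_univ _, mem_univ _⟩
    have hc1 : Continuous (fun p : ℝ × Eu n × Eu (n+1) × Eu (n+1) => (p.1, p.2.1, prjE p.2.2.1)) :=
      continuous_fst.prodMk ((continuous_fst.comp continuous_snd).prodMk
        (continuous_prjE.comp (continuous_fst.comp (continuous_snd.comp continuous_snd))))
    have hHc : ContinuousOn (fun p : ℝ × Eu n × Eu (n+1) × Eu (n+1) => H p.1 p.2.1 (prjE p.2.2.1))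
        (Icc t₀ ϑ₀ ×ˢ (univ : Set (Eu n)) ×ˢ Pset n ×ˢ Qset n) :=
      (Hcont hΥ hH).comp hc1.continuousOn hmaps
    have hx : Continuous (fun p : ℝ × Eu n × Eu (n+1) × Eu (n+1) => p.2.1) :=
      continuous_fst.comp continuous_snd
    have hu : Continuous (fun p : ℝ × Eu n × Eu (n+1) × Eu (n+1) => prjE p.2.2.1) :=
      continuous_prjE.comp (continuous_fst.comp (continuous_snd.comp continuous_snd))
    have hv : Continuous (fun p : ℝ × Eu n × Eu (n+1) × Eu (n+1) => prjE p.2.2.2) :=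
      continuous_prjE.comp (continuous_snd.comp (continuous_snd.comp continuous_snd))
    have hlv : Continuous (fun p : ℝ × Eu n × Eu (n+1) × Eu (n+1) => lastE p.2.2.2) :=
      continuous_lastE.comp (continuous_snd.comp (continuous_snd.comp continuous_snd))
    have hlam : Continuous (fun p : ℝ × Eu n × Eu (n+1) × Eu (n+1) => Υ * (1 + ‖p.2.1‖)) :=
      continuous_const.mul (continuous_const.add hx.norm)
    have hinner : Continuous (fun p : ℝ × Eu n × Eu (n+1) × Eu (n+1) =>
        (⟪prjE p.2.2.1, prjE p.2.2.2⟫ : ℝ)) := hu.inner hv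
    show ContinuousOn (fun p : ℝ × Eu n × Eu (n+1) × Eu (n+1) =>
        (H p.1 p.2.1 (prjE p.2.2.1) + Υ * (1 + ‖p.2.1‖) * (lastE p.2.2.2 - 1)
          - 2 * (Υ * (1 + ‖p.2.1‖)) * ⟪prjE p.2.2.1, prjE p.2.2.2⟫) • prjE p.2.2.1
        + (2 * (Υ * (1 + ‖p.2.1‖))) • prjE p.2.2.2) _
    exact (((hHc.add (hlam.mul (hlv.sub continuous_const)).continuousOn).sub
        ((continuous_const.mul hlam).mul hinner).continuousOn).smul hu.continuousOn).add
      ((continuous_const.mul hlam).smul hv).continuousOn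
  -- F2 : local Lipschitz in x
  · intro A hA
    obtain ⟨ω, L, hω, hL, hb⟩ := hH.2.1 A hA
    refine ⟨L + 7 * Υ, by linarith, ?_⟩
    rintro t htI x' hx' x'' hx'' u ⟨a, haS, rfl⟩ v ⟨⟨b, cc⟩, ⟨hbQ, hccQ⟩, rfl⟩
    rw [mem_sphere_zero_iff_norm] at haS
    simp only [mem_closedBall_zero_iff] at hbQ
    simp only [mem_Icc] at hccQ
    have hD : |‖x'‖ - ‖x''‖| ≤ ‖x' - x''‖ := abs_norm_sub_norm_le x' x''
    have hab : |⟪a, b⟫| ≤ 1 := by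
      calc |⟪a, b⟫| ≤ ‖a‖ * ‖b‖ := abs_real_inner_le_norm a b
        _ = ‖b‖ := by rw [haS, one_mul]
        _ ≤ 1 := hbQ
    have hHd : |H t x' a - H t x'' a| ≤ L * ‖x' - x''‖ := by
      have := hb 1 one_pos t htI t htI x' hx' x'' hx'' a a (le_of_eq haS) (le_of_eq haS)
      simpa [omega_zero hω] using this
    have hc1 : |cc - 1| ≤ 2 := abs_le.mpr ⟨by linarith [hccQ.1], by linarith [hccQ.2]⟩
    simp only [fdyn, prjE_snocE, lastE_snocE]
    have heq : ((H t x' a + Υ * (1 + ‖x'‖) * (cc - 1) - 2 * (Υ * (1 + ‖x'‖)) * ⟪a, b⟫) • a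
          + (2 * (Υ * (1 + ‖x'‖))) • b)
        - ((H t x'' a + Υ * (1 + ‖x''‖) * (cc - 1) - 2 * (Υ * (1 + ‖x''‖)) * ⟪a, b⟫) • a
          + (2 * (Υ * (1 + ‖x''‖))) • b)
        = ((H t x' a - H t x'' a) + Υ * (cc - 1) * (‖x'‖ - ‖x''‖)
            - 2 * Υ * ⟪a, b⟫ * (‖x'‖ - ‖x''‖)) • a
          + (2 * Υ * (‖x'‖ - ‖x''‖)) • b := by
      module
    rw [heq]
    have t1 : |Υ * (cc - 1) * (‖x'‖ - ‖x''‖)| ≤ Υ * 2 * ‖x' - x''‖ := by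
      rw [abs_mul, abs_mul, abs_of_pos hΥ]
      exact mul_le_mul (mul_le_mul le_rfl hc1 (abs_nonneg _) hΥ.le) hD (abs_nonneg _)
        (by positivity)
    have t2 : |2 * Υ * ⟪a, b⟫ * (‖x'‖ - ‖x''‖)| ≤ 2 * Υ * ‖x' - x''‖ := by
      rw [abs_mul]
      have h1 : |2 * Υ * ⟪a, b⟫| ≤ 2 * Υ := by
        rw [abs_mul, abs_of_nonneg (by positivity : (0:ℝ) ≤ 2 * Υ)]
        nlinarith [abs_nonneg (⟪a, b⟫ : ℝ)]
      calc |2 * Υ * ⟪a, b⟫| * |‖x'‖ - ‖x''‖| ≤ (2 * Υ) * ‖x' - x''‖ :=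
        mul_le_mul h1 hD (abs_nonneg _) (by positivity)
      _ = 2 * Υ * ‖x' - x''‖ := by ring
    have e0 : |(H t x' a - H t x'' a) + Υ * (cc - 1) * (‖x'‖ - ‖x''‖)
        - 2 * Υ * ⟪a, b⟫ * (‖x'‖ - ‖x''‖)| ≤ (L + 4 * Υ) * ‖x' - x''‖ := by
      have hA1 := abs_sub ((H t x' a - H t x'' a) + Υ * (cc - 1) * (‖x'‖ - ‖x''‖))
        (2 * Υ * ⟪a, b⟫ * (‖x'‖ - ‖x''‖))
      have hA2 := abs_add_le (H t x' a - H t x'' a) (Υ * (cc - 1) * (‖x'‖ - ‖x''‖))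
      nlinarith [hHd, t1, t2]
    have e1 : |2 * Υ * (‖x'‖ - ‖x''‖)| ≤ 2 * Υ * ‖x' - x''‖ := by
      rw [abs_mul, abs_of_nonneg (by positivity : (0:ℝ) ≤ 2 * Υ)]
      exact mul_le_mul_of_nonneg_left hD (by positivity)
    have hn1 : ‖((H t x' a - H t x'' a) + Υ * (cc - 1) * (‖x'‖ - ‖x''‖)
        - 2 * Υ * ⟪a, b⟫ * (‖x'‖ - ‖x''‖)) • a‖ ≤ (L + 4 * Υ) * ‖x' - x''‖ := by
      rw [norm_smul, Real.norm_eq_abs, haS, mul_one]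
      exact e0
    have hn2 : ‖(2 * Υ * (‖x'‖ - ‖x''‖)) • b‖ ≤ 2 * Υ * ‖x' - x''‖ := by
      rw [norm_smul, Real.norm_eq_abs]
      calc |2 * Υ * (‖x'‖ - ‖x''‖)| * ‖b‖ ≤ (2 * Υ * ‖x' - x''‖) * 1 :=
        mul_le_mul e1 hbQ (norm_nonneg b) (by positivity)
      _ = 2 * Υ * ‖x' - x''‖ := mul_one _
    calc ‖((H t x' a - H t x'' a) + Υ * (cc - 1) * (‖x'‖ - ‖x''‖)
          - 2 * Υ * ⟪a, b⟫ * (‖x'‖ - ‖x''‖)) • a + (2 * Υ * (‖x'‖ - ‖x''‖)) • b‖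
        ≤ ‖((H t x' a - H t x'' a) + Υ * (cc - 1) * (‖x'‖ - ‖x''‖)
          - 2 * Υ * ⟪a, b⟫ * (‖x'‖ - ‖x''‖)) • a‖ + ‖(2 * Υ * (‖x'‖ - ‖x''‖)) • b‖ :=
        norm_add_le _ _
      _ ≤ (L + 4 * Υ) * ‖x' - x''‖ + 2 * Υ * ‖x' - x''‖ := add_le_add hn1 hn2
      _ ≤ (L + 7 * Υ) * ‖x' - x''‖ := by nlinarith [norm_nonneg (x' - x''), hΥ.le]
  -- F3 : linear growth
  · refine ⟨7 * Υ, by linarith, ?_⟩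
    rintro t htI x u ⟨a, haS, rfl⟩ v ⟨⟨b, cc⟩, ⟨hbQ, hccQ⟩, rfl⟩
    rw [mem_sphere_zero_iff_norm] at haS
    simp only [mem_closedBall_zero_iff] at hbQ
    simp only [mem_Icc] at hccQ
    have hab : |⟪a, b⟫| ≤ 1 := by
      calc |⟪a, b⟫| ≤ ‖a‖ * ‖b‖ := abs_real_inner_le_norm a b
        _ = ‖b‖ := by rw [haS, one_mul]
        _ ≤ 1 := hbQ
    have hHb : |H t x a| ≤ Υ * (1 + ‖x‖) := by
      have := hH.1 t htI x a
      rw [haS] at this; linarith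
    have hc1 : |cc - 1| ≤ 2 := abs_le.mpr ⟨by linarith [hccQ.1], by linarith [hccQ.2]⟩
    simp only [fdyn, prjE_snocE, lastE_snocE]
    have hcb : |H t x a + Υ * (1 + ‖x‖) * (cc - 1) - 2 * (Υ * (1 + ‖x‖)) * ⟪a, b⟫|
        ≤ 5 * (Υ * (1 + ‖x‖)) := by
      have t1 : |Υ * (1 + ‖x‖) * (cc - 1)| ≤ Υ * (1 + ‖x‖) * 2 := by
        rw [abs_mul, abs_of_nonneg (by positivity : (0:ℝ) ≤ Υ * (1 + ‖x‖))]
        exact mul_le_mul_of_nonneg_left hc1 (by positivity)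
      have t2 : |2 * (Υ * (1 + ‖x‖)) * ⟪a, b⟫| ≤ 2 * (Υ * (1 + ‖x‖)) := by
        rw [abs_mul, abs_of_nonneg (by positivity : (0:ℝ) ≤ 2 * (Υ * (1 + ‖x‖)))]
        have := mul_le_mul_of_nonneg_left hab (by positivity : (0:ℝ) ≤ 2 * (Υ * (1 + ‖x‖)))
        simpa using this
      have hA1 := abs_sub (H t x a + Υ * (1 + ‖x‖) * (cc - 1)) (2 * (Υ * (1 + ‖x‖)) * ⟪a, b⟫)
      have hA2 := abs_add_le (H t x a) (Υ * (1 + ‖x‖) * (cc - 1))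
      nlinarith [hHb, t1, t2]
    have hn1 : ‖(H t x a + Υ * (1 + ‖x‖) * (cc - 1) - 2 * (Υ * (1 + ‖x‖)) * ⟪a, b⟫) • a‖
        ≤ 5 * (Υ * (1 + ‖x‖)) := by
      rw [norm_smul, Real.norm_eq_abs, haS, mul_one]
      exact hcb
    have hn2 : ‖(2 * (Υ * (1 + ‖x‖))) • b‖ ≤ 2 * (Υ * (1 + ‖x‖)) := by
      rw [norm_smul, Real.norm_eq_abs, abs_of_nonneg (by positivity : (0:ℝ) ≤ 2 * (Υ * (1 + ‖x‖)))]
      calc 2 * (Υ * (1 + ‖x‖)) * ‖b‖ ≤ 2 * (Υ * (1 + ‖x‖)) * 1 :=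
        mul_le_mul_of_nonneg_left hbQ (by positivity)
      _ = 2 * (Υ * (1 + ‖x‖)) := mul_one _
    calc ‖(H t x a + Υ * (1 + ‖x‖) * (cc - 1) - 2 * (Υ * (1 + ‖x‖)) * ⟪a, b⟫) • a
          + (2 * (Υ * (1 + ‖x‖))) • b‖
        ≤ ‖(H t x a + Υ * (1 + ‖x‖) * (cc - 1) - 2 * (Υ * (1 + ‖x‖)) * ⟪a, b⟫) • a‖
          + ‖(2 * (Υ * (1 + ‖x‖))) • b‖ := norm_add_le _ _
      _ ≤ 5 * (Υ * (1 + ‖x‖)) + 2 * (Υ * (1 + ‖x‖)) := add_le_add hn1 hn2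
      _ = 7 * Υ * (1 + ‖x‖) := by ring
  -- the minmax property
  · intro t htI x s
    set lam : ℝ := Υ * (1 + ‖x‖) with hlamdef
    have hlam : 0 ≤ lam := by positivity
    have hbound : ∀ w : Eu n, |H t x w| ≤ lam * ‖w‖ := by
      intro w
      have := hH.1 t htI x w
      rw [hlamdef]; nlinarith [this]
    have hlip : ∀ w w' : Eu n, |H t x w - H t x w'| ≤ lam * ‖w - w'‖ :=
      fun w w' => hLip hH htI x w w'
    have hom : ∀ (w : Eu n) (α : ℝ), 0 ≤ α → H t x (α • w) = α * H t x w :=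
      fun w α hα => hH.2.2 t htI x w α hα
    -- for a given unit vector a, the max over Q
    have hgr : ∀ a : Eu n, ‖a‖ = 1 →
        IsGreatest ((fun v => ⟪s, fdyn Υ H t x (snocE a 0) v⟫) '' Qset n)
          (H t x a * ⟪s, a⟫ + lam * (|⟪s, a⟫| - ⟪s, a⟫) + 2 * lam * ‖s - ⟪s, a⟫ • a‖) := by
      intro a ha
      have hfe : (fun v => (⟪s, fdyn Υ H t x (snocE a 0) v⟫ : ℝ))
          = fun v => H t x a * ⟪s, a⟫ + lam * (lastE v - 1) * ⟪s, a⟫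
            + 2 * lam * ⟪s - ⟪s, a⟫ • a, prjE v⟫ := by
        funext v
        rw [inner_fdyn, prjE_snocE, hlamdef]
      rw [hfe]
      exact isGreatest_aux lam (H t x a) hlam s a
    -- key inequality : H t x s is below each max value
    have hkey : ∀ a : Eu n, ‖a‖ = 1 →
        H t x s ≤ H t x a * ⟪s, a⟫ + lam * (|⟪s, a⟫| - ⟪s, a⟫) + 2 * lam * ‖s - ⟪s, a⟫ • a‖ :=
      fun a ha => key_ineq (H t x) lam hlam hbound hlip hom s a ha
    -- the minimizing direction
    obtain ⟨aopt, haopt, hval⟩ : ∃ a : Eu n, ‖a‖ = 1 ∧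
        H t x a * ⟪s, a⟫ + lam * (|⟪s, a⟫| - ⟪s, a⟫) + 2 * lam * ‖s - ⟪s, a⟫ • a‖ = H t x s := by
      rcases eq_or_ne s 0 with hs0 | hs0
      · refine ⟨a₀, ha₀, ?_⟩
        have hH0 : H t x 0 = 0 := by
          have := hH.1 t htI x 0
          simp only [norm_zero, mul_zero, zero_mul] at this
          exact abs_eq_zero.mp (le_antisymm this (abs_nonneg _))
        simp [hs0, hH0]
      · set a : Eu n := ‖s‖⁻¹ • s with hadef
        have hsn : ‖s‖ ≠ 0 := norm_ne_zero_iff.mpr hs0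
        have ha : ‖a‖ = 1 := by
          rw [hadef, norm_smul, norm_inv, norm_norm, inv_mul_cancel₀ hsn]
        refine ⟨a, ha, ?_⟩
        have hip : ⟪s, a⟫ = ‖s‖ := by
          rw [hadef, real_inner_smul_right, real_inner_self_eq_norm_mul_norm]
          field_simp
        have hsa : s - ⟪s, a⟫ • a = 0 := by
          rw [hip, hadef, smul_smul, mul_inv_cancel₀ hsn, one_smul, sub_self]
        have hsval : H t x (‖s‖ • a) = ‖s‖ * H t x a := hom a ‖s‖ (norm_nonneg s)
        have hsa2 : (‖s‖ : ℝ) • a = s := by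
          rw [hadef, smul_smul, mul_inv_cancel₀ hsn, one_smul]
        rw [hsa, hip, abs_of_nonneg (norm_nonneg s)]
        rw [hsa2] at hsval
        simp [hsval]
        ring
    refine ⟨?_, ?_, ?_⟩
    · rintro u ⟨a, haS, rfl⟩
      rw [mem_sphere_zero_iff_norm] at haS
      exact ⟨_, hgr a haS⟩
    · exact ⟨snocE aopt 0, ⟨aopt, by simpa [mem_sphere_zero_iff_norm] using haopt, rfl⟩,
        hval ▸ hgr aopt haopt⟩
    · rintro r ⟨u, ⟨a, haS, rfl⟩, hr⟩
      rw [mem_sphere_zero_iff_norm] at haS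
      have := (hgr a haS).unique hr
      rw [← this]
      exact hkey a haS
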